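/- arXiv:0812.2553 — 2 statements merged into one kernel-verified Lean document; each statement's English description precedes it below -/
import Mathlib

section
/- For every integer p ≥ 0, every odd positive integer m, and every real number x, the Euler function satisfies Ē_p(mx) = m^p · Σ_{s=0}^{m−1} (−1)^s Ē_p(x + s/m). -/
open Finset

/-- The Euler numbers `E_n`, defined by `E_0 = 1` and the recurrence
`∑_{l=0}^{n} C(n,l) E_l + E_n = 0` for `n ≥ 1`. -/
def eulerNumber : ℕ → ℚ
  | 0 => 1
  | n + 1 => -(∑ l : Fin (n + 1), ((n + 1).choose l : ℚ) * eulerNumber l) / 2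

/-- The Euler polynomials `E_n(x) = ∑_{l=0}^{n} C(n,l) E_l x^{n-l}`. -/
noncomputable def eulerPoly (n : ℕ) (x : ℝ) : ℝ :=
  ∑ l ∈ Finset.range (n + 1), (n.choose l : ℝ) * (eulerNumber l : ℝ) * x ^ (n - l)

/-- The Euler function `Ē_p(x) = (-1)^⌊x⌋ E_p(x - ⌊x⌋)`. -/
noncomputable def eulerFun (p : ℕ) (x : ℝ) : ℝ := (-1 : ℝ) ^ ⌊x⌋ * eulerPoly p (x - ⌊x⌋)

/-- The Dedekind-type DC sum `T_p(h,k) = 2 ∑_{u=1}^{k-1} (-1)^{u-1} (u/k) Ē_p(hu/k)`. -/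
noncomputable def dcSum (p h k : ℕ) : ℝ :=
  2 * ∑ u ∈ Finset.Ico 1 k, (-1 : ℝ) ^ (u - 1) * ((u : ℝ) / k) * eulerFun p (h * u / k)

lemma eulerNumber_recur (k : ℕ) :
    (∑ l ∈ Finset.range (k + 2), ((k+1).choose l : ℚ) * eulerNumber l) + eulerNumber (k+1) = 0 := by
  have h : eulerNumber (k+1)
      = -(∑ l ∈ Finset.range (k + 1), ((k+1).choose l : ℚ) * eulerNumber l) / 2 := by
    rw [eulerNumber, ← Fin.sum_univ_eq_sum_range (fun l => ((k+1).choose l : ℚ) * eulerNumber l)]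
  rw [Finset.sum_range_succ, Nat.choose_self, h]
  ring

lemma eulerNumber_recurR {n : ℕ} (hn : 0 < n) :
    (∑ l ∈ Finset.range (n + 1), (n.choose l : ℝ) * (eulerNumber l : ℝ)) + (eulerNumber n : ℝ) = 0 := by
  obtain ⟨k, rfl⟩ := Nat.exists_eq_add_of_lt hn
  have := eulerNumber_recur k
  rw [zero_add] at *
  exact_mod_cast congrArg (fun q : ℚ => (q : ℝ)) this

lemma choose_swap {p l j : ℕ} (h : l + j ≤ p) :
    p.choose l * (p - l).choose j = p.choose j * (p - j).choose l := by
  have h1 := Nat.choose_mul (n := p) (Nat.le_add_right l j)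
  have h2 := Nat.choose_mul (n := p) (Nat.le_add_left j l)
  simp only [Nat.add_sub_cancel, Nat.add_sub_cancel_left] at h1 h2
  have h3 : (l + j).choose l = (l + j).choose j := by
    rw [← Nat.choose_symm (Nat.le_add_left j l), Nat.add_sub_cancel]
  rw [← h1, ← h2, h3]

lemma sum_tri_aux {M : Type*} [AddCommMonoid M] (n : ℕ) (f : ℕ → ℕ → M) (l : ℕ) (hl : l < n) :
    ∑ j ∈ Finset.range (n - l), f l j = ∑ j ∈ Finset.range n, if l + j < n then f l j else 0 := by
  calc ∑ j ∈ Finset.range (n - l), f l j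
      = ∑ j ∈ Finset.range (n - l), if l + j < n then f l j else 0 := by
        refine Finset.sum_congr rfl fun j hj => ?_
        rw [Finset.mem_range] at hj
        rw [if_pos (by omega)]
    _ = ∑ j ∈ Finset.range n, if l + j < n then f l j else 0 := by
        refine Finset.sum_subset (Finset.range_subset_range.2 (by omega)) fun j _ hj => ?_
        rw [Finset.mem_range] at hj
        rw [if_neg (by omega)]

lemma sum_tri {M : Type*} [AddCommMonoid M] (n : ℕ) (f : ℕ → ℕ → M) :
    ∑ l ∈ Finset.range n, ∑ j ∈ Finset.range (n - l), f l j
      = ∑ j ∈ Finset.range n, ∑ l ∈ Finset.range (n - j), f l j := by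
  rw [Finset.sum_congr rfl fun l hl => sum_tri_aux n f l (Finset.mem_range.1 hl),
    Finset.sum_comm]
  refine Finset.sum_congr rfl fun j hj => ?_
  rw [sum_tri_aux n (fun a b => f b a) j (Finset.mem_range.1 hj)]
  exact Finset.sum_congr rfl fun l _ => by rw [Nat.add_comm]

lemma eulerPoly_add_one (p : ℕ) (x : ℝ) :
    eulerPoly p (x + 1) + eulerPoly p x = 2 * x ^ p := by
  have e1 : eulerPoly p (x + 1)
      = ∑ j ∈ Finset.range (p+1), ∑ l ∈ Finset.range (p+1-j),
          (p.choose j : ℝ) * x ^ j * (((p-j).choose l : ℝ) * (eulerNumber l : ℝ)) := by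
    unfold eulerPoly
    rw [← sum_tri (p+1) (fun l j => (p.choose j : ℝ) * x ^ j * (((p-j).choose l : ℝ) * (eulerNumber l : ℝ)))]
    refine Finset.sum_congr rfl fun l hl => ?_
    rw [Finset.mem_range] at hl
    rw [add_pow, Finset.mul_sum, show p - l + 1 = p + 1 - l by omega]
    refine Finset.sum_congr rfl fun j hj => ?_
    rw [Finset.mem_range] at hj
    have hc : (p.choose l : ℝ) * ((p-l).choose j : ℝ) = (p.choose j : ℝ) * ((p-j).choose l : ℝ) := by
      exact_mod_cast congrArg (Nat.cast : ℕ → ℝ) (choose_swap (show l + j ≤ p by omega))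
    rw [one_pow]
    linear_combination (eulerNumber l : ℝ) * x ^ j * hc
  have e2 : eulerPoly p x
      = ∑ j ∈ Finset.range (p+1), (p.choose j : ℝ) * x ^ j * (eulerNumber (p-j) : ℝ) := by
    unfold eulerPoly
    have hr := Finset.sum_range_reflect
      (fun j => (p.choose j : ℝ) * x ^ j * (eulerNumber (p-j) : ℝ)) (p+1)
    rw [← hr]
    refine Finset.sum_congr rfl fun l hl => ?_
    rw [Finset.mem_range] at hl
    rw [show p + 1 - 1 - l = p - l by omega, Nat.sub_sub_self (show l ≤ p by omega),
      Nat.choose_symm (show l ≤ p by omega)]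
    ring
  rw [e1, e2, ← Finset.sum_add_distrib, Finset.sum_range_succ]
  have hz : ∀ j ∈ Finset.range p,
      (∑ l ∈ Finset.range (p+1-j), (p.choose j : ℝ) * x ^ j * (((p-j).choose l : ℝ) * (eulerNumber l : ℝ)))
        + (p.choose j : ℝ) * x ^ j * (eulerNumber (p-j) : ℝ) = 0 := by
    intro j hj
    rw [Finset.mem_range] at hj
    rw [← Finset.mul_sum, ← mul_add, show p+1-j = (p-j)+1 by omega,
      eulerNumber_recurR (show 0 < p - j by omega), mul_zero]
  rw [Finset.sum_eq_zero hz, zero_add, show p+1-p = 1 by omega]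
  simp [eulerNumber]
  ring

lemma eulerFun_add_one (p : ℕ) (x : ℝ) : eulerFun p (x + 1) = -eulerFun p x := by
  unfold eulerFun
  have h1 : x + 1 - (((⌊x⌋ : ℤ) + 1 : ℤ) : ℝ) = x - ⌊x⌋ := by push_cast; ring
  rw [Int.floor_add_one, h1, zpow_add_one₀ (by norm_num : (-1:ℝ) ≠ 0)]
  ring

lemma eulerFun_of_mem (p : ℕ) {x : ℝ} (h0 : 0 ≤ x) (h1 : x < 1) :
    eulerFun p x = eulerPoly p x := by
  unfold eulerFun
  rw [Int.floor_eq_zero_iff.2 ⟨h0, h1⟩]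
  simp

noncomputable def EP (n : ℕ) : Polynomial ℝ :=
  ∑ l ∈ Finset.range (n + 1),
    Polynomial.C ((n.choose l : ℝ) * (eulerNumber l : ℝ)) * Polynomial.X ^ (n - l)

lemma EP_eval (n : ℕ) (x : ℝ) : (EP n).eval x = eulerPoly n x := by
  simp [EP, eulerPoly, Polynomial.eval_finset_sum]

lemma eulerPoly_mul (p m : ℕ) (hm : 0 < m) (hmodd : Odd m) (x : ℝ) :
    eulerPoly p ((m : ℝ) * x) =
      (m : ℝ) ^ p * ∑ s ∈ Finset.range m, (-1 : ℝ) ^ s * eulerPoly p (x + (s : ℝ) / m) := by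
  have hm' : (0:ℝ) < m := by exact_mod_cast hm
  have hm0 : (m:ℝ) ≠ 0 := ne_of_gt hm'
  set Q : Polynomial ℝ := (EP p).comp (Polynomial.C (m:ℝ) * Polynomial.X) -
      Polynomial.C ((m:ℝ)^p) * ∑ s ∈ Finset.range m,
        Polynomial.C ((-1:ℝ)^s) * (EP p).comp (Polynomial.X + Polynomial.C ((s:ℝ)/m)) with hQ
  have hev : ∀ y : ℝ, Q.eval y = eulerPoly p ((m:ℝ)*y)
      - (m:ℝ)^p * ∑ s ∈ Finset.range m, (-1:ℝ)^s * eulerPoly p (y + (s:ℝ)/m) := by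
    intro y
    simp [hQ, Polynomial.eval_finset_sum, EP_eval]
  have anti : ∀ y : ℝ, Q.eval (y + 1/m) = - Q.eval y := by
    intro y
    rw [hev, hev]
    have hmp : ((m:ℝ)*y)^p = (m:ℝ)^p * y^p := mul_pow _ _ _
    have hL : eulerPoly p ((m:ℝ)*(y+1/m)) = 2*((m:ℝ)*y)^p - eulerPoly p ((m:ℝ)*y) := by
      rw [show (m:ℝ)*(y+1/m) = (m:ℝ)*y + 1 by rw [mul_add, mul_one_div, div_self hm0]]
      linarith [eulerPoly_add_one p ((m:ℝ)*y)]
    have hR : (∑ s ∈ Finset.range m, (-1:ℝ)^s * eulerPoly p (y + 1/m + (s:ℝ)/m))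
        + (∑ s ∈ Finset.range m, (-1:ℝ)^s * eulerPoly p (y + (s:ℝ)/m)) = 2 * y^p := by
      rw [← Finset.sum_add_distrib]
      have hcong : ∀ s ∈ Finset.range m,
          (-1:ℝ)^s * eulerPoly p (y + 1/m + (s:ℝ)/m) + (-1:ℝ)^s * eulerPoly p (y + (s:ℝ)/m)
          = ((fun s : ℕ => (-1:ℝ)^s * eulerPoly p (y + (s:ℝ)/m)) s
            - (fun s : ℕ => (-1:ℝ)^s * eulerPoly p (y + (s:ℝ)/m)) (s+1)) := by
        intro s _
        simp only [pow_succ, Nat.cast_add, Nat.cast_one]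
        rw [show y + ((s:ℝ)+1)/m = y + 1/m + (s:ℝ)/m by field_simp; ring]
        ring
      rw [Finset.sum_congr rfl hcong, Finset.sum_range_sub']
      simp only [Nat.cast_zero, pow_zero, zero_div, add_zero, one_mul]
      rw [hmodd.neg_one_pow, show y + (m:ℝ)/m = y + 1 by rw [div_self hm0]]
      linarith [eulerPoly_add_one p y]
    linear_combination hL - (m:ℝ)^p * hR + 2 * hmp
  have per : ∀ y : ℝ, Q.eval (y + 2/m) = Q.eval y := by
    intro y
    rw [show y + 2/m = (y + 1/m) + 1/m by ring, anti, anti, neg_neg]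
  have hroots : ∀ k : ℕ, Q.eval ((k:ℝ) * (2/m)) = Q.eval 0 := by
    intro k
    induction k with
    | zero => simp
    | succ n ih =>
        rw [show ((n+1:ℕ):ℝ) * (2/m) = (n:ℝ)*(2/m) + 2/m by push_cast; ring, per, ih]
  have hQ0 : Q = Polynomial.C (Q.eval 0) := by
    rw [← sub_eq_zero]
    apply Polynomial.eq_zero_of_infinite_isRoot
    have h2m : (2:ℝ)/m ≠ 0 := by positivity
    have hinj : Function.Injective (fun k : ℕ => (k:ℝ)*(2/m)) := by
      intro a b hab
      exact_mod_cast mul_right_cancel₀ h2m hab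
    apply Set.infinite_of_injective_forall_mem hinj
    intro k
    simp only [Set.mem_setOf_eq, Polynomial.IsRoot, Polynomial.eval_sub, Polynomial.eval_C]
    rw [hroots k, sub_self]
  have c0 : Q.eval 0 = 0 := by
    have h := anti 0
    rw [hQ0] at h
    simp only [Polynomial.eval_C] at h
    linarith
  have hx := hev x
  rw [hQ0, Polynomial.eval_C, c0] at hx
  linarith

/-- Multiplication theorem for the Euler function: for odd positive `m`,
`Ē_p(mx) = m^p ∑_{s=0}^{m−1} (−1)^s Ē_p(x + s/m)`. -/
theorem eulerFun_mul (p m : ℕ) (hm : 0 < m) (hmodd : Odd m) (x : ℝ) :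
    eulerFun p ((m : ℝ) * x) =
      (m : ℝ) ^ p * ∑ s ∈ Finset.range m, (-1 : ℝ) ^ s * eulerFun p (x + (s : ℝ) / m) := by
  have hm' : (0:ℝ) < m := by exact_mod_cast hm
  have hm0 : (m:ℝ) ≠ 0 := ne_of_gt hm'
  set F : ℝ → ℝ := fun y => eulerFun p ((m:ℝ)*y)
      - (m:ℝ)^p * ∑ s ∈ Finset.range m, (-1:ℝ)^s * eulerFun p (y + (s:ℝ)/m) with hF
  have anti : Function.Antiperiodic F (1/(m:ℝ)) := by
    intro y
    simp only [hF]
    have hL : eulerFun p ((m:ℝ)*(y+1/m)) = - eulerFun p ((m:ℝ)*y) := by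
      rw [show (m:ℝ)*(y+1/m) = (m:ℝ)*y + 1 by rw [mul_add, mul_one_div, div_self hm0]]
      exact eulerFun_add_one p _
    have hR : (∑ s ∈ Finset.range m, (-1:ℝ)^s * eulerFun p (y + 1/m + (s:ℝ)/m))
        + (∑ s ∈ Finset.range m, (-1:ℝ)^s * eulerFun p (y + (s:ℝ)/m)) = 0 := by
      rw [← Finset.sum_add_distrib]
      have hcong : ∀ s ∈ Finset.range m,
          (-1:ℝ)^s * eulerFun p (y + 1/m + (s:ℝ)/m) + (-1:ℝ)^s * eulerFun p (y + (s:ℝ)/m)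
          = ((fun s : ℕ => (-1:ℝ)^s * eulerFun p (y + (s:ℝ)/m)) s
            - (fun s : ℕ => (-1:ℝ)^s * eulerFun p (y + (s:ℝ)/m)) (s+1)) := by
        intro s _
        simp only [pow_succ, Nat.cast_add, Nat.cast_one]
        rw [show y + ((s:ℝ)+1)/m = y + 1/m + (s:ℝ)/m by field_simp; ring]
        ring
      rw [Finset.sum_congr rfl hcong, Finset.sum_range_sub']
      simp only [Nat.cast_zero, pow_zero, zero_div, add_zero, one_mul]
      rw [hmodd.neg_one_pow, show y + (m:ℝ)/m = y + 1 by rw [div_self hm0],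
        eulerFun_add_one p y]
      ring
    rw [hL]
    linear_combination (-(m:ℝ)^p) * hR
  have hker : ∀ y : ℝ, 0 ≤ y → y < 1/m → F y = 0 := by
    intro y h0 h1
    have hmy0 : (0:ℝ) ≤ (m:ℝ)*y := by positivity
    have hmy1 : (m:ℝ)*y < 1 := by
      have := mul_lt_mul_of_pos_left h1 hm'
      rwa [mul_one_div, div_self hm0] at this
    simp only [hF]
    rw [eulerFun_of_mem p hmy0 hmy1]
    have hcong : ∀ s ∈ Finset.range m, (-1:ℝ)^s * eulerFun p (y + (s:ℝ)/m)
        = (-1:ℝ)^s * eulerPoly p (y + (s:ℝ)/m) := by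
      intro s hs
      rw [Finset.mem_range] at hs
      congr 1
      apply eulerFun_of_mem
      · positivity
      · have hs' : (s:ℝ) ≤ (m:ℝ) - 1 := by
          have h : (s:ℝ) + 1 ≤ (m:ℝ) := by exact_mod_cast hs
          linarith
        have h2 : (s:ℝ)/m ≤ ((m:ℝ)-1)/m := by gcongr
        have h3 : 1/(m:ℝ) + ((m:ℝ)-1)/m = 1 := by field_simp; ring
        linarith
    rw [Finset.sum_congr rfl hcong, eulerPoly_mul p m hm hmodd y]
    ring
  have hy0 : 0 ≤ x - (⌊(m:ℝ)*x⌋ : ℝ)/m := by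
    rw [sub_nonneg, div_le_iff₀ hm']
    have := Int.floor_le ((m:ℝ)*x)
    linarith
  have hy1 : x - (⌊(m:ℝ)*x⌋ : ℝ)/m < 1/m := by
    rw [sub_lt_iff_lt_add, ← add_div, lt_div_iff₀ hm']
    have := Int.lt_floor_add_one ((m:ℝ)*x)
    linarith
  have hFx : F x = 0 := by
    have hx : x = (x - (⌊(m:ℝ)*x⌋ : ℝ)/m) + (⌊(m:ℝ)*x⌋ : ℤ) * (1/(m:ℝ)) := by
      ring
    rw [hx, anti.add_int_mul_eq, hker _ hy0 hy1, mul_zero]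
  simp only [hF] at hFx
  linarith
end

section
/- (Lemma 1) For every odd integer p ≥ 1, one has Σ_{s=0}^{p} C(p,s) E_s / (p − s + 2) = 2 E_{p+2} / ((p+1)(p+2)), where E_s denotes the s-th Euler number. -/
open Finset

open Nat PowerSeries

lemma eulerNumber_zero : eulerNumber 0 = 1 := by rw [eulerNumber]

lemma eulerNumber_succ (n : ℕ) : eulerNumber (n + 1) =
    -(∑ l ∈ Finset.range (n + 1), ((n + 1).choose l : ℚ) * eulerNumber l) / 2 := by
  rw [eulerNumber, ← Fin.sum_univ_eq_sum_range]

/-- The basic recurrence: `∑_{l=0}^{n} C(n,l) E_l = -E_n` for `n ≥ 1`. -/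
lemma sum_eulerNumber {n : ℕ} (hn : 1 ≤ n) :
    ∑ l ∈ Finset.range (n + 1), (n.choose l : ℚ) * eulerNumber l = -eulerNumber n := by
  obtain ⟨m, rfl⟩ := Nat.exists_eq_add_of_le hn
  rw [Finset.sum_range_succ, Nat.choose_self, Nat.cast_one, one_mul]
  have h := eulerNumber_succ m
  have : ∑ l ∈ Finset.range (m + 1), ((m + 1).choose l : ℚ) * eulerNumber l
      = -2 * eulerNumber (m + 1) := by
    rw [h]; ring
  rw [add_comm 1 m] at *
  rw [this]; ring

/-- The EGF of the Euler numbers. -/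
noncomputable def eulerSeries : PowerSeries ℚ := PowerSeries.mk fun n => eulerNumber n / n !

lemma coeff_eulerSeries_mul_exp (n : ℕ) :
    (PowerSeries.coeff (R := ℚ) n) (eulerSeries * exp ℚ) =
      (∑ l ∈ Finset.range (n + 1), (n.choose l : ℚ) * eulerNumber l) / n ! := by
  rw [PowerSeries.coeff_mul, Finset.Nat.sum_antidiagonal_eq_sum_range_succ_mk, Finset.sum_div]
  refine Finset.sum_congr rfl fun l hl => ?_
  have hl' : l ≤ n := Finset.mem_range_succ_iff.mp hl
  rw [eulerSeries, PowerSeries.coeff_mk, PowerSeries.coeff_exp, Nat.cast_choose ℚ hl']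
  have h1 : (l ! : ℚ) ≠ 0 := by exact_mod_cast (Nat.factorial_ne_zero l)
  have h2 : ((n - l)! : ℚ) ≠ 0 := by exact_mod_cast (Nat.factorial_ne_zero (n - l))
  have h3 : (n ! : ℚ) ≠ 0 := by exact_mod_cast (Nat.factorial_ne_zero n)
  rw [show (algebraMap ℚ ℚ) (1 / (n - l)! : ℚ) = 1 / ((n-l)! : ℚ) from rfl]
  field_simp

lemma eulerSeries_spec : (exp ℚ + 1) * eulerSeries = 2 := by
  ext n
  cases' n with n
  · rw [PowerSeries.coeff_zero_eq_constantCoeff, map_ofNat]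
    simp [eulerSeries, eulerNumber_zero]
    norm_num
  · have h1 : (PowerSeries.coeff (R := ℚ) (n + 1)) ((exp ℚ + 1) * eulerSeries) =
        (PowerSeries.coeff (R := ℚ) (n + 1)) (eulerSeries * exp ℚ) +
          (PowerSeries.coeff (R := ℚ) (n + 1)) eulerSeries := by
      rw [mul_comm, mul_add, mul_one, map_add]
    rw [h1, coeff_eulerSeries_mul_exp, sum_eulerNumber (Nat.le_add_left 1 n)]
    have h2 : (PowerSeries.coeff (R := ℚ) (n + 1)) (2 : PowerSeries ℚ) = 0 := by
      rw [show (2 : PowerSeries ℚ) = PowerSeries.C (R := ℚ) 2 from (map_ofNat (PowerSeries.C (R := ℚ)) 2).symm, PowerSeries.coeff_C]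
      simp
    rw [h2]
    simp [eulerSeries, PowerSeries.coeff_mk, neg_div]

lemma exp_add_one_ne_zero : exp ℚ + 1 ≠ 0 := fun h => by
  have := congrArg (PowerSeries.constantCoeff (R := ℚ)) h
  rw [map_add, map_one, constantCoeff_exp, map_zero] at this
  norm_num at this

lemma eulerSeries_add_evalNeg : eulerSeries + evalNegHom eulerSeries = 2 := by
  have h2 : (exp ℚ + 1) * evalNegHom eulerSeries = 2 * exp ℚ := by
    have h := congrArg (fun f => exp ℚ * evalNegHom f) eulerSeries_spec
    simp only [map_mul, map_add, map_one, map_ofNat] at h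
    calc (exp ℚ + 1) * evalNegHom eulerSeries
        = exp ℚ * ((evalNegHom (exp ℚ) + 1) * evalNegHom eulerSeries) := by
          rw [← mul_assoc, mul_add, mul_one, exp_mul_exp_neg_eq_one, add_comm]
      _ = exp ℚ * 2 := h
      _ = 2 * exp ℚ := mul_comm _ _
  apply mul_left_cancel₀ exp_add_one_ne_zero
  rw [mul_add, eulerSeries_spec, h2]
  ring

lemma eulerNumber_even_eq_zero {n : ℕ} (hn : Even n) (h1 : 1 ≤ n) : eulerNumber n = 0 := by
  have h := congrArg (PowerSeries.coeff (R := ℚ) n) eulerSeries_add_evalNeg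
  rw [map_add] at h
  have hc : (PowerSeries.coeff (R := ℚ) n) (2 : PowerSeries ℚ) = 0 := by
    rw [show (2 : PowerSeries ℚ) = PowerSeries.C (R := ℚ) 2 from (map_ofNat (PowerSeries.C (R := ℚ)) 2).symm,
      PowerSeries.coeff_C]
    simp [Nat.one_le_iff_ne_zero.mp h1]
  rw [hc, show evalNegHom eulerSeries = PowerSeries.rescale (-1 : ℚ) eulerSeries from rfl,
    PowerSeries.coeff_rescale, hn.neg_one_pow, one_mul, eulerSeries, PowerSeries.coeff_mk] at h
  have h3 : (n ! : ℚ) ≠ 0 := by exact_mod_cast (Nat.factorial_ne_zero n)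
  field_simp at h
  linarith

lemma choose_ratio {p s : ℕ} (h : s ≤ p) :
    ((p + 2).choose s : ℚ) * ((p : ℚ) - s + 1) * ((p : ℚ) - s + 2) =
      (p.choose s : ℚ) * (((p : ℚ) + 1) * ((p : ℚ) + 2)) := by
  have hs2 : s ≤ p + 2 := by omega
  have e2 : ((p - s : ℕ) : ℚ) = (p : ℚ) - s := by rw [Nat.cast_sub h]
  have h1 : (s ! : ℚ) ≠ 0 := by exact_mod_cast Nat.factorial_ne_zero s
  have h2 : ((p - s)! : ℚ) ≠ 0 := by exact_mod_cast Nat.factorial_ne_zero (p - s)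
  have f1 : (p.choose s : ℚ) * (s !) * ((p - s)!) = (p !) := by
    exact_mod_cast congrArg (Nat.cast (R := ℚ)) (Nat.choose_mul_factorial_mul_factorial h)
  have f2 : ((p + 2).choose s : ℚ) * (s !) * ((p + 2 - s)!) = ((p + 2)!) := by
    exact_mod_cast congrArg (Nat.cast (R := ℚ)) (Nat.choose_mul_factorial_mul_factorial hs2)
  rw [show p + 2 - s = (p - s) + 2 from by omega, Nat.factorial_succ ((p - s) + 1),
    Nat.factorial_succ (p - s)] at f2
  rw [show (p + 2)! = (p + 2) * ((p + 1) * (p !)) from by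
    rw [Nat.factorial_succ, Nat.factorial_succ]] at f2
  push_cast at f2
  rw [e2] at f2
  apply mul_right_cancel₀ h1
  apply mul_right_cancel₀ h2
  linear_combination f2 - (((p : ℚ) + 1) * ((p : ℚ) + 2)) * f1

lemma choose_succ_sub {p s : ℕ} (h : s ≤ p + 1) :
    ((p : ℚ) + 2 - s) * ((p + 2).choose s : ℚ) = ((p : ℚ) + 2) * ((p + 1).choose s : ℚ) := by
  have hs2 : s ≤ p + 2 := by omega
  have e2 : ((p + 1 - s : ℕ) : ℚ) = (p : ℚ) + 1 - s := by
    rw [Nat.cast_sub h]; push_cast; ring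
  have h1 : (s ! : ℚ) ≠ 0 := by exact_mod_cast Nat.factorial_ne_zero s
  have h2 : ((p + 1 - s)! : ℚ) ≠ 0 := by exact_mod_cast Nat.factorial_ne_zero (p + 1 - s)
  have f1 : ((p + 1).choose s : ℚ) * (s !) * ((p + 1 - s)!) = ((p + 1)!) := by
    exact_mod_cast congrArg (Nat.cast (R := ℚ)) (Nat.choose_mul_factorial_mul_factorial h)
  have f2 : ((p + 2).choose s : ℚ) * (s !) * ((p + 2 - s)!) = ((p + 2)!) := by
    exact_mod_cast congrArg (Nat.cast (R := ℚ)) (Nat.choose_mul_factorial_mul_factorial hs2)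
  rw [show p + 2 - s = (p + 1 - s) + 1 from by omega, Nat.factorial_succ (p + 1 - s)] at f2
  rw [show (p + 2)! = (p + 2) * ((p + 1)!) from Nat.factorial_succ _] at f2
  push_cast at f2
  rw [e2] at f2
  apply mul_right_cancel₀ h1
  apply mul_right_cancel₀ h2
  linear_combination f2 - ((p : ℚ) + 2) * f1

/-- Lemma 1: for odd `p ≥ 1`,
`∑_{s=0}^{p} C(p,s) E_s / (p − s + 2) = 2 E_{p+2} / ((p+1)(p+2))`. -/
theorem eulerNumber_sum_div (p : ℕ) (hp : 1 ≤ p) (hpodd : Odd p) :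
    ∑ s ∈ Finset.range (p + 1), (p.choose s : ℚ) * eulerNumber s / ((p : ℚ) - s + 2) =
      2 * eulerNumber (p + 2) / (((p : ℚ) + 1) * ((p : ℚ) + 2)) := by
  have hp1 : eulerNumber (p + 1) = 0 :=
    eulerNumber_even_eq_zero hpodd.add_one (by omega)
  have hc : (((p : ℚ) + 1) * ((p : ℚ) + 2)) ≠ 0 := by positivity
  have step1 : ∀ s ∈ Finset.range (p + 1),
      (p.choose s : ℚ) * eulerNumber s / ((p : ℚ) - s + 2) =
        ((p + 2).choose s : ℚ) * ((p : ℚ) - s + 1) * eulerNumber s /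
          (((p : ℚ) + 1) * ((p : ℚ) + 2)) := by
    intro s hs
    have h : s ≤ p := Finset.mem_range_succ_iff.mp hs
    have hsp : (s : ℚ) ≤ p := by exact_mod_cast h
    have hd : (p : ℚ) - s + 2 ≠ 0 := ne_of_gt (by linarith)
    rw [div_eq_div_iff hd hc]
    linear_combination (-eulerNumber s) * choose_ratio h
  rw [Finset.sum_congr rfl step1, ← Finset.sum_div]
  have S1' : ∑ s ∈ Finset.range (p + 1), ((p + 1).choose s : ℚ) * eulerNumber s = 0 := by
    have S1 := sum_eulerNumber (n := p + 1) (by omega)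
    rw [Finset.sum_range_succ] at S1
    simp only [Nat.choose_self, Nat.cast_one, one_mul, hp1] at S1 ⊢
    linarith
  have S2' : ∑ s ∈ Finset.range (p + 1), ((p + 2).choose s : ℚ) * eulerNumber s =
      -2 * eulerNumber (p + 2) := by
    have S2 := sum_eulerNumber (n := p + 2) (by omega)
    rw [show p + 2 + 1 = (p + 1) + 1 + 1 from rfl, Finset.sum_range_succ,
      Finset.sum_range_succ] at S2
    simp only [Nat.choose_self, Nat.cast_one, one_mul, hp1, mul_zero, add_zero] at S2
    linarith
  have main : ∑ s ∈ Finset.range (p + 1),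
      ((p + 2).choose s : ℚ) * ((p : ℚ) - s + 1) * eulerNumber s = 2 * eulerNumber (p + 2) := by
    have expand : ∀ s ∈ Finset.range (p + 1),
        ((p + 2).choose s : ℚ) * ((p : ℚ) - s + 1) * eulerNumber s =
          ((p : ℚ) + 2) * (((p + 1).choose s : ℚ) * eulerNumber s) -
            ((p + 2).choose s : ℚ) * eulerNumber s := by
      intro s hs
      have h : s ≤ p + 1 := by
        have := Finset.mem_range_succ_iff.mp hs; omega
      linear_combination eulerNumber s * choose_succ_sub (p := p) (s := s) h
    rw [Finset.sum_congr rfl expand, Finset.sum_sub_distrib, ← Finset.mul_sum, S1', S2']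
    ring
  rw [main]
end
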